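/- Let (φ_λ)_{λ∈Λ}, with Λ finite, be an orthonormal basis of ℝ^n, let Λ = ⋃_{a∈K} Λ_a be a partition of Λ into pairwise disjoint nonempty subsets, let Y ∈ ℝ^n and q_a > 0 for each a ∈ K. Then the block soft-thresholding estimator β̂ = Σ_{a∈K} Σ_{λ∈Λ_a} (η₁(P_a Y, q_a))_λ φ_λ is the unique solution of: minimize ‖β‖₂² over β ∈ ℝ^n subject to ‖P_a(Y − β)‖₂ ≤ q_a for every a ∈ K. -/

import Mathlib

-- per-block key inequality
lemma bst_key {Λ : Type*} (s : Finset Λ) (c d : Λ → ℝ) (q t R : ℝ) (hq : 0 < q)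
    (hR : R = Real.sqrt (∑ l ∈ s, c l ^ 2))
    (ht : t = max (1 - q / R) 0)
    (hfeas : ∑ l ∈ s, (c l - (t * c l + d l)) ^ 2 ≤ q ^ 2) :
    ∑ l ∈ s, d l ^ 2 + ∑ l ∈ s, (t * c l) ^ 2 ≤ ∑ l ∈ s, (t * c l + d l) ^ 2 := by
  have hsum : ∑ l ∈ s, c l ^ 2 = R ^ 2 := by
    rw [hR, Real.sq_sqrt (Finset.sum_nonneg fun l _ => sq_nonneg _)]
  have hRnn : 0 ≤ R := hR ▸ Real.sqrt_nonneg _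
  have expand : ∑ l ∈ s, (t * c l + d l) ^ 2
      = ∑ l ∈ s, (t * c l) ^ 2 + 2 * t * (∑ l ∈ s, c l * d l) + ∑ l ∈ s, d l ^ 2 := by
    rw [Finset.mul_sum, ← Finset.sum_add_distrib, ← Finset.sum_add_distrib]
    apply Finset.sum_congr rfl
    intro l _; ring
  rw [expand]
  have key : 0 ≤ 2 * t * (∑ l ∈ s, c l * d l) := by
    rcases eq_or_lt_of_le hRnn with hR0 | hRpos
    · -- R = 0 : all c vanish on s
      have : ∑ l ∈ s, c l ^ 2 = 0 := by rw [hsum, ← hR0]; ring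
      have hc0 : ∀ l ∈ s, c l = 0 := by
        intro l hl
        have := (Finset.sum_eq_zero_iff_of_nonneg (fun l _ => sq_nonneg (c l))).mp this l hl
        exact pow_eq_zero_iff (by norm_num) |>.mp this
      have : ∑ l ∈ s, c l * d l = 0 := Finset.sum_eq_zero fun l hl => by rw [hc0 l hl, zero_mul]
      rw [this, mul_zero]
    · rcases le_or_gt t 0 with ht0 | htpos
      · have : t = 0 := le_antisymm ht0 (ht ▸ le_max_right _ _)
        rw [this]; ring_nf; exact le_refl 0
      · -- t > 0, so t = 1 - q/R and q < R
        have htval : t = 1 - q / R := by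
          rcases max_cases (1 - q / R) 0 with ⟨h1, _⟩ | ⟨h1, _⟩
          · rw [ht, h1]
          · exfalso; rw [ht, h1] at htpos; exact lt_irrefl 0 htpos
        have h1t : 1 - t = q / R := by rw [htval]; ring
        -- feasibility expansion
        have expf : ∑ l ∈ s, (c l - (t * c l + d l)) ^ 2
            = (1 - t) ^ 2 * R ^ 2 - 2 * (1 - t) * (∑ l ∈ s, c l * d l) + ∑ l ∈ s, d l ^ 2 := by
          rw [← hsum, Finset.mul_sum, Finset.mul_sum, ← Finset.sum_sub_distrib,
            ← Finset.sum_add_distrib]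
          apply Finset.sum_congr rfl
          intro l _; ring
        rw [expf, h1t] at hfeas
        have hq2 : (q / R) ^ 2 * R ^ 2 = q ^ 2 := by
          field_simp
        rw [hq2] at hfeas
        have hd2 : (0:ℝ) ≤ ∑ l ∈ s, d l ^ 2 := Finset.sum_nonneg fun l _ => sq_nonneg _
        have hcd : 0 ≤ ∑ l ∈ s, c l * d l := by
          nlinarith [div_pos hq hRpos]
        positivity
  linarith

-- per-block feasibility of the estimator
lemma bst_feas {Λ : Type*} (s : Finset Λ) (c : Λ → ℝ) (q t R : ℝ) (hq : 0 < q)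
    (hR : R = Real.sqrt (∑ l ∈ s, c l ^ 2))
    (ht : t = max (1 - q / R) 0) :
    Real.sqrt (∑ l ∈ s, (c l - t * c l) ^ 2) ≤ q := by
  have hsum : ∑ l ∈ s, c l ^ 2 = R ^ 2 := by
    rw [hR, Real.sq_sqrt (Finset.sum_nonneg fun l _ => sq_nonneg _)]
  have hRnn : 0 ≤ R := hR ▸ Real.sqrt_nonneg _
  have ht1 : t ≤ 1 := by
    rw [ht]
    rcases le_or_gt R 0 with h | h
    · have : R = 0 := le_antisymm h hRnn
      simp [this]
    · have : 0 ≤ q / R := le_of_lt (div_pos hq h)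
      apply max_le (by linarith) (by norm_num)
  have htnn : 0 ≤ t := ht ▸ le_max_right _ _
  have hval : ∑ l ∈ s, (c l - t * c l) ^ 2 = ((1 - t) * R) ^ 2 := by
    rw [mul_pow, ← hsum, Finset.mul_sum]
    apply Finset.sum_congr rfl
    intro l _; ring
  rw [hval, Real.sqrt_sq (by nlinarith)]
  rcases eq_or_lt_of_le hRnn with hR0 | hRpos
  · rw [← hR0]; simpa using le_of_lt hq
  · rcases le_or_gt R q with hle | hgt
    · calc (1 - t) * R ≤ 1 * R := by nlinarith
        _ ≤ q := by linarith
    · have htval : t = 1 - q / R := by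
        rw [ht, max_eq_left]
        have : q / R < 1 := (div_lt_one hRpos).mpr hgt
        linarith
      rw [htval]
      have : (1 - (1 - q / R)) * R = q := by field_simp; ring
      linarith

theorem block_soft_thresholding_variational {n : ℕ} {Λ K : Type*} [Fintype Λ] [Fintype K]
    (φ : OrthonormalBasis Λ ℝ (EuclideanSpace ℝ (Fin n)))
    (Blk : K → Finset Λ)
    (hdisj : ∀ a a' : K, a ≠ a' → Disjoint (Blk a) (Blk a'))
    (hne : ∀ a : K, (Blk a).Nonempty)
    (hcover : ∀ l : Λ, ∃ a : K, l ∈ Blk a)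
    (Y : EuclideanSpace ℝ (Fin n)) (q : K → ℝ) (hq : ∀ a, 0 < q a)
    -- `Pnorm a v = ‖P_a v‖₂`, the Euclidean norm of the block of coefficients of `v`
    (Pnorm : K → EuclideanSpace ℝ (Fin n) → ℝ)
    (hPnorm : ∀ (a : K) (v : EuclideanSpace ℝ (Fin n)),
      Pnorm a v = Real.sqrt (∑ l ∈ Blk a, (inner ℝ (φ l) v : ℝ) ^ 2))
    (βhat : EuclideanSpace ℝ (Fin n))
    (hβhat : βhat = ∑ a : K, ∑ l ∈ Blk a,
      ((inner ℝ (φ l) Y : ℝ) * max (1 - q a / Pnorm a Y) 0) • φ l) :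
    (∀ a : K, Pnorm a (Y - βhat) ≤ q a) ∧
    ∀ β : EuclideanSpace ℝ (Fin n),
      (∀ a : K, Pnorm a (Y - β) ≤ q a) → β ≠ βhat →
      ‖βhat‖ ^ 2 < ‖β‖ ^ 2 := by
  classical
  set c : Λ → ℝ := fun l => (inner ℝ (φ l) Y : ℝ) with hc
  set t : K → ℝ := fun a => max (1 - q a / Pnorm a Y) 0 with htdef
  -- choice of block
  have hA : ∀ l : Λ, ∃ a, l ∈ Blk a := hcover
  let A : Λ → K := fun l => (hA l).choose
  have hAmem : ∀ l, l ∈ Blk (A l) := fun l => (hA l).choose_spec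
  have hAuniq : ∀ (a : K) (l : Λ), l ∈ Blk a → A l = a := by
    intro a l hl
    by_contra h
    exact Finset.disjoint_left.mp (hdisj _ _ h) (hAmem l) hl
  -- decomposition of sums over Λ into blocks
  have hbiU : (Finset.univ : Finset Λ) = Finset.univ.biUnion Blk := by
    ext l
    simp only [Finset.mem_biUnion, Finset.mem_univ, true_and, true_iff]
    exact hcover l
  have hsplit : ∀ f : Λ → ℝ, ∑ l : Λ, f l = ∑ a : K, ∑ l ∈ Blk a, f l := by
    intro f
    rw [hbiU, Finset.sum_biUnion]
    intro a _ a' _ h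
    exact hdisj a a' h
  -- coefficients of βhat
  have hcoef : ∀ (a : K), ∀ l ∈ Blk a, (inner ℝ (φ l) βhat : ℝ) = t a * c l := by
    intro a l hl
    rw [hβhat, inner_sum]
    have hortho := orthonormal_iff_ite.mp φ.orthonormal
    have hterm : ∀ a' : K, (inner ℝ (φ l) (∑ l' ∈ Blk a', (c l' * t a') • φ l') : ℝ)
        = if l ∈ Blk a' then c l * t a' else 0 := by
      intro a'
      rw [inner_sum]
      have : ∀ l' ∈ Blk a', (inner ℝ (φ l) ((c l' * t a') • φ l') : ℝ)
          = if l = l' then c l' * t a' else 0 := by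
        intro l' _
        rw [real_inner_smul_right, hortho l l']
        by_cases h : l = l' <;> simp [h]
      rw [Finset.sum_congr rfl this, Finset.sum_ite_eq]
    rw [Finset.sum_congr rfl (fun a' _ => hterm a')]
    rw [Finset.sum_eq_single a]
    · simp [hl, mul_comm]
    · intro a' _ h
      have : l ∉ Blk a' := fun hl' => h (by rw [← hAuniq a' l hl', hAuniq a l hl])
      simp [this]
    · intro h
      exact absurd (Finset.mem_univ a) h
  -- Parseval
  have parseval : ∀ v : EuclideanSpace ℝ (Fin n), ‖v‖ ^ 2 = ∑ l, (inner ℝ (φ l) v : ℝ) ^ 2 := by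
    intro v
    have h := φ.repr.norm_map v
    rw [← h, EuclideanSpace.norm_eq, Real.sq_sqrt (by positivity)]
    simp [φ.repr_apply_apply, sq_abs]
  -- block norms of residual
  have hres : ∀ (a : K) (β : EuclideanSpace ℝ (Fin n)),
      Pnorm a (Y - β) = Real.sqrt (∑ l ∈ Blk a, (c l - (inner ℝ (φ l) β : ℝ)) ^ 2) := by
    intro a β
    rw [hPnorm]
    congr 1
    apply Finset.sum_congr rfl
    intro l _
    rw [inner_sub_right]
  have hPnormY : ∀ a : K, Pnorm a Y = Real.sqrt (∑ l ∈ Blk a, c l ^ 2) := fun a => hPnorm a Y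
  constructor
  · -- feasibility of βhat
    intro a
    rw [hres a βhat]
    have : ∀ l ∈ Blk a, (c l - (inner ℝ (φ l) βhat : ℝ)) ^ 2 = (c l - t a * c l) ^ 2 := by
      intro l hl; rw [hcoef a l hl]
    rw [Finset.sum_congr rfl this]
    exact bst_feas (Blk a) c (q a) (t a) (Pnorm a Y) (hq a) (hPnormY a) rfl
  · -- optimality
    intro β hfeas hne'
    set b : Λ → ℝ := fun l => (inner ℝ (φ l) β : ℝ) with hb
    set d : Λ → ℝ := fun l => b l - t (A l) * c l with hd
    -- per-block inequality
    have hblock : ∀ a : K,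
        ∑ l ∈ Blk a, d l ^ 2 + ∑ l ∈ Blk a, (t a * c l) ^ 2 ≤ ∑ l ∈ Blk a, b l ^ 2 := by
      intro a
      have hfa : ∑ l ∈ Blk a, (c l - (t a * c l + d l)) ^ 2 ≤ (q a) ^ 2 := by
        have h1 := hfeas a
        rw [hres a β] at h1
        have h2 : ∑ l ∈ Blk a, (c l - b l) ^ 2 ≤ (q a) ^ 2 := by
          have hnn : (0:ℝ) ≤ ∑ l ∈ Blk a, (c l - b l) ^ 2 :=
            Finset.sum_nonneg fun l _ => sq_nonneg _
          calc ∑ l ∈ Blk a, (c l - b l) ^ 2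
              = (Real.sqrt (∑ l ∈ Blk a, (c l - b l) ^ 2)) ^ 2 := (Real.sq_sqrt hnn).symm
            _ ≤ (q a) ^ 2 := by
                apply pow_le_pow_left₀ (Real.sqrt_nonneg _) h1
        calc ∑ l ∈ Blk a, (c l - (t a * c l + d l)) ^ 2
            = ∑ l ∈ Blk a, (c l - b l) ^ 2 := by
              apply Finset.sum_congr rfl
              intro l hl
              rw [hd]
              simp only [hAuniq a l hl]
              ring_nf
          _ ≤ (q a) ^ 2 := h2
      have hrw : ∑ l ∈ Blk a, (t a * c l + d l) ^ 2 = ∑ l ∈ Blk a, b l ^ 2 := by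
        apply Finset.sum_congr rfl
        intro l hl
        rw [hd]
        simp only [hAuniq a l hl]
        ring_nf
      have := bst_key (Blk a) c d (q a) (t a) (Pnorm a Y) (hq a) (hPnormY a) rfl hfa
      linarith [this, hrw ▸ this]
    -- sum up
    have hβ2 : ‖β‖ ^ 2 = ∑ a : K, ∑ l ∈ Blk a, b l ^ 2 := by
      rw [parseval β, hsplit]
    have hβhat2 : ‖βhat‖ ^ 2 = ∑ a : K, ∑ l ∈ Blk a, (t a * c l) ^ 2 := by
      rw [parseval βhat, hsplit]
      apply Finset.sum_congr rfl
      intro a _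
      apply Finset.sum_congr rfl
      intro l hl
      rw [hcoef a l hl]
    have hdpos : 0 < ∑ l : Λ, d l ^ 2 := by
      by_contra h
      push_neg at h
      have h0 : ∑ l : Λ, d l ^ 2 = 0 :=
        le_antisymm h (Finset.sum_nonneg fun l _ => sq_nonneg _)
      have hdl : ∀ l : Λ, d l = 0 := by
        intro l
        have := (Finset.sum_eq_zero_iff_of_nonneg
          (fun l (_ : l ∈ Finset.univ) => sq_nonneg (d l))).mp h0 l (Finset.mem_univ l)
        exact pow_eq_zero_iff (by norm_num) |>.mp this
      apply hne'
      apply φ.repr.injective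
      ext l
      rw [φ.repr_apply_apply, φ.repr_apply_apply]
      have h2 : b l - t (A l) * c l = 0 := hdl l
      have hbl : b l = t (A l) * c l := by linarith
      rw [show (inner ℝ (φ l) β : ℝ) = b l from rfl, hbl,
        hcoef (A l) l (hAmem l)]
    have hsum : ∑ l : Λ, d l ^ 2 = ∑ a : K, ∑ l ∈ Blk a, d l ^ 2 := hsplit _
    have : ∑ a : K, (∑ l ∈ Blk a, d l ^ 2 + ∑ l ∈ Blk a, (t a * c l) ^ 2)
        ≤ ∑ a : K, ∑ l ∈ Blk a, b l ^ 2 :=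
      Finset.sum_le_sum fun a _ => hblock a
    rw [Finset.sum_add_distrib] at this
    rw [hβ2, hβhat2]
    calc ∑ a : K, ∑ l ∈ Blk a, (t a * c l) ^ 2
        < ∑ a : K, ∑ l ∈ Blk a, d l ^ 2 + ∑ a : K, ∑ l ∈ Blk a, (t a * c l) ^ 2 := by
          rw [← hsum] at *
          linarith
      _ ≤ ∑ a : K, ∑ l ∈ Blk a, b l ^ 2 := this
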